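/- Let f : ℝⁿ → ℝ be C¹-smooth and q ∈ ℝ be such that T_q(f) = max{q, f} is convex. Then for every x with f(x) = q, the subdifferential of T_q(f) at x equals {t·∇f(x) : t ∈ [0, 1]}. -/

import Mathlib

open RealInnerProductSpace Filter Set

lemma slope_tendsto (n : ℕ) (f : EuclideanSpace ℝ (Fin n) → ℝ) (q : ℝ)
    (hf : ContDiff ℝ 1 f) (x : EuclideanSpace ℝ (Fin n)) (hx : f x = q)
    (d : EuclideanSpace ℝ (Fin n)) :
    Tendsto (fun s : ℝ => (f (x + s • d) - q) / s) (nhdsWithin 0 (Ioi 0))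
      (nhds ⟪gradient f x, d⟫) := by
  have hgrad : HasGradientAt f (gradient f x) x :=
    ((hf.differentiable one_ne_zero) x).hasGradientAt
  have hline : HasDerivAt (fun s : ℝ => x + s • d) d 0 := by
    simpa using ((hasDerivAt_id (0:ℝ)).smul_const d).const_add x
  have hgrad2 : HasFDerivAt f
      ((InnerProductSpace.toDual ℝ (EuclideanSpace ℝ (Fin n))) (gradient f x))
      (x + (0:ℝ) • d) := by simpa using hgrad.hasFDerivAt
  have hφ : HasDerivAt (fun s : ℝ => f (x + s • d)) ⟪gradient f x, d⟫ 0 := by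
    have := hgrad2.comp_hasDerivAt 0 hline
    simp at this ⊢; exact this
  have h := hasDerivAt_iff_tendsto_slope.mp hφ
  have h2 : Tendsto (slope (fun s : ℝ => f (x + s • d)) 0) (nhdsWithin 0 (Ioi 0))
      (nhds ⟪gradient f x, d⟫) :=
    h.mono_left (nhdsWithin_mono _ (fun s hs => ne_of_gt hs))
  refine h2.congr' ?_
  filter_upwards [self_mem_nhdsWithin] with s hs
  simp [slope_def_field, div_eq_inv_mul, hx]
  try ring

theorem stmt_8 (n : ℕ) (f : EuclideanSpace ℝ (Fin n) → ℝ) (q : ℝ)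
    (hf : ContDiff ℝ 1 f)
    (hconv : ConvexOn ℝ Set.univ (fun x => max q (f x))) :
    ∀ x, f x = q →
      {v : EuclideanSpace ℝ (Fin n) |
        ∀ y, max q (f x) + ⟪y - x, v⟫ ≤ max q (f y)} =
        (fun t : ℝ => t • gradient f x) '' Set.Icc (0 : ℝ) 1 := by
  intro x hx
  set w := gradient f x with hw
  have hmaxx : max q (f x) = q := by rw [hx]; exact max_self q
  have hmsub : ∀ z : EuclideanSpace ℝ (Fin n),
      max q (f z) - q = max 0 (f z - q) := by
    intro z
    rcases le_total q (f z) with h | h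
    · rw [max_eq_right h, max_eq_right (by linarith)]
    · rw [max_eq_left h, max_eq_left (by linarith)]; ring
  -- key: w ∈ ∂g(x)
  have hkey : ∀ y, ⟪y - x, w⟫ ≤ max q (f y) - q := by
    intro y
    have htend := slope_tendsto n f q hf x hx (y - x)
    have hle : ∀ᶠ s : ℝ in nhdsWithin 0 (Ioi 0),
        (f (x + s • (y - x)) - q) / s ≤ max q (f y) - q := by
      filter_upwards [Ioo_mem_nhdsGT_of_mem (by simp : (0:ℝ) ∈ Ico (0:ℝ) 1)]
        with s hs
      obtain ⟨hs0, hs1⟩ := hs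
      have hcvx := hconv.2 (Set.mem_univ x) (Set.mem_univ y)
        (by linarith : (0:ℝ) ≤ 1 - s) (le_of_lt hs0) (by ring)
      have heq : (1 - s) • x + s • y = x + s • (y - x) := by
        simp [smul_sub, sub_smul]; abel
      simp only [heq, hmaxx, smul_eq_mul] at hcvx
      have h1 : f (x + s • (y - x)) - q ≤ s * (max q (f y) - q) := by
        have h2 : f (x + s • (y - x)) ≤ max q (f (x + s • (y - x))) := le_max_right _ _
        nlinarith
      rw [div_le_iff₀ hs0]
      linarith
    have := le_of_tendsto htend hle
    rwa [real_inner_comm]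
  refine Set.Subset.antisymm ?_ ?_
  · -- ⊆
    intro v hv
    simp only [Set.mem_setOf_eq, hmaxx] at hv
    have hstar : ∀ d, ⟪d, v⟫ ≤ max 0 ⟪w, d⟫ := by
      intro d
      have htend := slope_tendsto n f q hf x hx d
      have htend2 : Tendsto (fun s : ℝ => max 0 ((f (x + s • d) - q) / s))
          (nhdsWithin 0 (Ioi 0)) (nhds (max 0 ⟪w, d⟫)) :=
        (continuous_const.max continuous_id).continuousAt.tendsto.comp htend
      refine ge_of_tendsto htend2 ?_
      filter_upwards [self_mem_nhdsWithin] with s hs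
      have hs0 : (0:ℝ) < s := hs
      have h1 := hv (x + s • d)
      have hin : ⟪(x + s • d) - x, v⟫ = s * ⟪d, v⟫ := by
        simp [inner_smul_left]
      rw [hin] at h1
      have h2 : s * ⟪d, v⟫ ≤ max 0 (f (x + s • d) - q) := by
        rw [← hmsub]; linarith
      calc ⟪d, v⟫ = (s * ⟪d, v⟫) / s := by field_simp
        _ ≤ max 0 (f (x + s • d) - q) / s := div_le_div_of_nonneg_right h2 hs0.le
        _ = max 0 ((f (x + s • d) - q) / s) := by
            rcases le_or_gt (f (x + s • d) - q) 0 with h | h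
            · rw [max_eq_left h, max_eq_left (div_nonpos_iff.mpr (Or.inr ⟨h, le_of_lt hs0⟩))]
              simp
            · rw [max_eq_right (le_of_lt h), max_eq_right (le_of_lt (div_pos h hs0))]
    by_cases hw0 : w = 0
    · have hvv : ⟪v, v⟫ ≤ 0 := by
        have := hstar v
        rwa [hw0, inner_zero_left, max_self] at this
      have hv0 : v = 0 := inner_self_eq_zero.mp
        (le_antisymm hvv real_inner_self_nonneg)
      exact ⟨0, ⟨le_refl 0, zero_le_one⟩, by simp [hv0]⟩
    · have hwn : (0:ℝ) < ⟪w, w⟫ := real_inner_self_nonneg.lt_of_ne (fun h => hw0 (inner_self_eq_zero.mp h.symm))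
      set t : ℝ := ⟪w, v⟫ / ⟪w, w⟫ with ht
      set u : EuclideanSpace ℝ (Fin n) := v - t • w with hu
      have huw : ⟪w, u⟫ = 0 := by
        rw [hu, inner_sub_right, inner_smul_right, ht,
          div_mul_cancel₀ _ (ne_of_gt hwn), sub_self]
      have huw' : ⟪u, w⟫ = 0 := by rw [real_inner_comm]; exact huw
      have huv : ⟪u, v⟫ = 0 := by
        have h1 := hstar u
        have h2 := hstar (-u)
        rw [huw, max_self] at h1
        rw [inner_neg_right, huw, neg_zero, max_self, inner_neg_left] at h2
        linarith
      have huu : u = 0 := by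
        have h0 : ⟪u, u⟫ = 0 := by
          have : ⟪u, u⟫ = ⟪u, v⟫ - t * ⟪u, w⟫ := by
            conv_lhs => rw [show u = v - t • w from hu]
            rw [inner_sub_right, inner_smul_right]
          rw [this, huv, huw']; ring
        exact inner_self_eq_zero.mp h0
      have hvt : v = t • w := sub_eq_zero.mp huu
      have ht0 : 0 ≤ t := by
        have h2 := hstar (-w)
        rw [inner_neg_right, inner_neg_left] at h2
        have hmax : max 0 (-⟪w, w⟫) = 0 := max_eq_left (by linarith)
        rw [hmax] at h2
        have : 0 ≤ ⟪w, v⟫ := by linarith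
        exact div_nonneg this (le_of_lt hwn)
      have ht1 : t ≤ 1 := by
        have h2 := hstar w
        rw [max_eq_right (le_of_lt hwn)] at h2
        rw [ht, div_le_one hwn]
        linarith
      exact ⟨t, ⟨ht0, ht1⟩, hvt.symm⟩
  · -- ⊇
    rintro v ⟨t, ⟨ht0, ht1⟩, rfl⟩
    intro y
    rw [hmaxx]
    have hA := hkey y
    have hsm : ⟪y - x, t • w⟫ = t * ⟪y - x, w⟫ := by
      rw [inner_smul_right]
    rw [hsm]
    have hM : 0 ≤ max q (f y) - q := by
      have := le_max_left q (f y); linarith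
    nlinarith
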